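/- Let G = (V, ω, μ) be a locally finite connected weighted graph with D_μ < ∞, and Ω ⊆ V a nonempty finite subset with nonempty interior Ω°. Let f : [0,∞) → ℝ be continuous and convex with f(0) ≥ 0, and let u : [0,∞) × Ω → ℝ be nonnegative, continuous and differentiable in t, with u(t,x) = 0 for all (t,x) ∈ [0,∞) × ∂Ω and ∂_t u(t,x) = Δ_Ω u(t,x) + f(u(t,x)) for all (t,x) ∈ (0,∞) × Ω°. Define J(t) = ∑_{x∈Ω°} μ(x) u(t,x) φ₁(x). Then J is differentiable and J'(t) ≥ −λ₁ J(t) + f(J(t)) for all t > 0. -/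

import Mathlib

open Set

/-- The μ-Laplacian on a weighted graph; for `x` in the interior of a finite set `Ω`
and functions vanishing on `∂Ω` this is the Dirichlet Laplacian `Δ_Ω`. -/
noncomputable def graphLap {V : Type*} (ω : V → V → ℝ) (μ : V → ℝ)
    (h : V → ℝ) (x : V) : ℝ :=
  (∑' y, ω x y * (h y - h x)) / μ x

open Classical in
/-- The boundary `∂Ω = {x ∈ Ω : ∃ y ∉ Ω, y ~ x}` of a finite subset of a weighted graph. -/
noncomputable def graphBoundary {V : Type*} (ω : V → V → ℝ) (Ω : Finset V) : Finset V :=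
  Ω.filter fun x => ∃ y ∉ Ω, 0 < ω x y

open Classical in
/-- The interior `Ω° = Ω \ ∂Ω` of a finite subset of a weighted graph: the points of `Ω`
all of whose neighbours lie in `Ω`. -/
noncomputable def graphInterior {V : Type*} (ω : V → V → ℝ) (Ω : Finset V) : Finset V :=
  Ω.filter fun x => ∀ y, 0 < ω x y → y ∈ Ω

/-- For a nonnegative solution `u` of the Dirichlet problem `∂ₜu = Δ_Ω u + f(u)` with
zero boundary values, the function `J(t) = ∑_{x∈Ω°} μ(x) u(t,x) φ₁(x)` is differentiable
and satisfies `J'(t) ≥ −λ₁ J(t) + f(J(t))` for all `t > 0`. -/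
theorem eigenfunction_functional_differential_inequality
    {V : Type*} [Countable V] (ω : V → V → ℝ) (μ : V → ℝ)
    (hsymm : ∀ x y, ω x y = ω y x)
    (hwnn : ∀ x y, 0 ≤ ω x y)
    (hμpos : ∀ x, 0 < μ x)
    (hlocfin : ∀ x, {y | 0 < ω x y}.Finite)
    (hdeg : ∀ x, ∃ y, 0 < ω x y)
    (hconn : ∀ x y, Relation.ReflTransGen (fun a b => 0 < ω a b) x y)
    (Dμ : ℝ) (hDμ : ∀ x, (∑' y, ω x y) / μ x ≤ Dμ)
    (Ω : Finset V) (hΩne : Ω.Nonempty) (hΩint : (graphInterior ω Ω).Nonempty)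
    -- the nonlinearity
    (f : ℝ → ℝ)
    (hf_cont : ContinuousOn f (Ici (0:ℝ)))
    (hf_conv : ConvexOn ℝ (Ici (0:ℝ)) f)
    (hf_nonneg : 0 ≤ f 0)
    -- `λ₁`, the smallest eigenvalue of `−Δ_Ω`, with positive normalized eigenfunction `φ₁`
    (lam₁ : ℝ) (hlam₁_pos : 0 < lam₁)
    (φ₁ : V → ℝ)
    (hφ₁_pos : ∀ x ∈ graphInterior ω Ω, 0 < φ₁ x)
    (hφ₁_zero : ∀ x ∉ graphInterior ω Ω, φ₁ x = 0)
    (hφ₁_norm : ∑ x ∈ graphInterior ω Ω, μ x * φ₁ x = 1)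
    (hφ₁_eig : ∀ x ∈ graphInterior ω Ω, graphLap ω μ φ₁ x = -lam₁ * φ₁ x)
    (hlam₁_min : ∀ (lam : ℝ) (ψ : V → ℝ), (∀ x ∉ graphInterior ω Ω, ψ x = 0) → ψ ≠ 0 →
      (∀ x ∈ graphInterior ω Ω, graphLap ω μ ψ x = -lam * ψ x) → lam₁ ≤ lam)
    -- the nonnegative solution `u` of the Dirichlet problem
    (u u' : ℝ → V → ℝ)
    (hu_nonneg : ∀ t ≥ (0:ℝ), ∀ x ∈ Ω, 0 ≤ u t x)
    (hu_cont : ∀ x ∈ Ω, ContinuousOn (fun t => u t x) (Ici (0:ℝ)))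
    (hu_deriv : ∀ x ∈ Ω, ∀ t > (0:ℝ), HasDerivAt (fun s => u s x) (u' t x) t)
    (hu_bdry : ∀ t ≥ (0:ℝ), ∀ x ∈ graphBoundary ω Ω, u t x = 0)
    (hu_eq : ∀ t > (0:ℝ), ∀ x ∈ graphInterior ω Ω,
      u' t x = graphLap ω μ (u t) x + f (u t x)) :
    -- conclusion: `J` is differentiable and `J' ≥ −λ₁ J + f(J)` for `t > 0`
    ∀ t > (0:ℝ),
      HasDerivAt (fun s => ∑ x ∈ graphInterior ω Ω, μ x * u s x * φ₁ x)
        (∑ x ∈ graphInterior ω Ω, μ x * u' t x * φ₁ x) t ∧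
      -lam₁ * (∑ x ∈ graphInterior ω Ω, μ x * u t x * φ₁ x) +
          f (∑ x ∈ graphInterior ω Ω, μ x * u t x * φ₁ x) ≤
        ∑ x ∈ graphInterior ω Ω, μ x * u' t x * φ₁ x := by
  classical
  intro t ht
  set I := graphInterior ω Ω with hIdef
  have hIsub : ∀ x ∈ I, x ∈ Ω := fun x hx => (Finset.mem_filter.mp hx).1
  have hderiv : HasDerivAt (fun s => ∑ x ∈ I, μ x * u s x * φ₁ x)
      (∑ x ∈ I, μ x * u' t x * φ₁ x) t := by
    apply HasDerivAt.fun_sum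
    intro x hx
    exact ((hu_deriv x (hIsub x hx) t ht).const_mul (μ x)).mul_const (φ₁ x)
  refine ⟨hderiv, ?_⟩
  -- the Laplacian at interior points is a finite sum over Ω
  have hlap : ∀ (h : V → ℝ), ∀ x ∈ I, μ x * graphLap ω μ h x
      = ∑ y ∈ Ω, ω x y * (h y - h x) := by
    intro h x hx
    have hxI := Finset.mem_filter.mp hx
    have hts : (∑' y, ω x y * (h y - h x)) = ∑ y ∈ Ω, ω x y * (h y - h x) := by
      apply tsum_eq_sum
      intro y hy
      have hzero : ω x y = 0 := by
        by_contra hne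
        exact hy (hxI.2 y (lt_of_le_of_ne (hwnn x y) (Ne.symm hne)))
      simp [hzero]
    rw [graphLap, hts, mul_div_cancel₀ _ (hμpos x).ne']
  -- u vanishes on Ω \ I (the boundary)
  have hu_zero : ∀ x ∈ Ω, x ∉ I → u t x = 0 := by
    intro x hx hxI
    apply hu_bdry t ht.le
    rw [graphBoundary, Finset.mem_filter]
    refine ⟨hx, ?_⟩
    rw [hIdef, graphInterior, Finset.mem_filter] at hxI
    push_neg at hxI
    obtain ⟨y, hy1, hy2⟩ := hxI hx
    exact ⟨y, hy2, hy1⟩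
  -- Green's identity
  have green : ∑ x ∈ I, μ x * φ₁ x * graphLap ω μ (u t) x
      = ∑ x ∈ I, μ x * (u t x) * graphLap ω μ φ₁ x := by
    have hsub : I ⊆ Ω := fun x hx => hIsub x hx
    have L1 : ∑ x ∈ I, μ x * φ₁ x * graphLap ω μ (u t) x
        = ∑ x ∈ Ω, φ₁ x * ∑ y ∈ Ω, ω x y * (u t y - u t x) := by
      calc ∑ x ∈ I, μ x * φ₁ x * graphLap ω μ (u t) x
          = ∑ x ∈ I, φ₁ x * ∑ y ∈ Ω, ω x y * (u t y - u t x) := by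
            apply Finset.sum_congr rfl
            intro x hx
            rw [← hlap (u t) x hx]; ring
        _ = ∑ x ∈ Ω, φ₁ x * ∑ y ∈ Ω, ω x y * (u t y - u t x) := by
            apply Finset.sum_subset hsub
            intro x hx hxI
            rw [hφ₁_zero x hxI, zero_mul]
    have L2 : ∑ x ∈ I, μ x * (u t x) * graphLap ω μ φ₁ x
        = ∑ x ∈ Ω, u t x * ∑ y ∈ Ω, ω x y * (φ₁ y - φ₁ x) := by
      calc ∑ x ∈ I, μ x * (u t x) * graphLap ω μ φ₁ x
          = ∑ x ∈ I, u t x * ∑ y ∈ Ω, ω x y * (φ₁ y - φ₁ x) := by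
            apply Finset.sum_congr rfl
            intro x hx
            rw [← hlap φ₁ x hx]; ring
        _ = ∑ x ∈ Ω, u t x * ∑ y ∈ Ω, ω x y * (φ₁ y - φ₁ x) := by
            apply Finset.sum_subset hsub
            intro x hx hxI
            rw [hu_zero x hx hxI, zero_mul]
    rw [L1, L2]
    have e1 : ∀ x ∈ Ω, φ₁ x * ∑ y ∈ Ω, ω x y * (u t y - u t x)
        = ∑ y ∈ Ω, (ω x y * u t y * φ₁ x - ω x y * u t x * φ₁ x) := by
      intro x _
      rw [Finset.mul_sum]
      exact Finset.sum_congr rfl fun y _ => by ring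
    have e2 : ∀ x ∈ Ω, u t x * ∑ y ∈ Ω, ω x y * (φ₁ y - φ₁ x)
        = ∑ y ∈ Ω, (ω x y * φ₁ y * u t x - ω x y * u t x * φ₁ x) := by
      intro x _
      rw [Finset.mul_sum]
      exact Finset.sum_congr rfl fun y _ => by ring
    rw [Finset.sum_congr rfl e1, Finset.sum_congr rfl e2]
    simp only [Finset.sum_sub_distrib]
    congr 1
    rw [Finset.sum_comm]
    apply Finset.sum_congr rfl
    intro x _
    apply Finset.sum_congr rfl
    intro y _
    rw [hsymm y x]
    ring
  -- rewrite the derivative sum using the equation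
  have hsplit : ∑ x ∈ I, μ x * u' t x * φ₁ x
      = ∑ x ∈ I, μ x * φ₁ x * graphLap ω μ (u t) x
        + ∑ x ∈ I, (μ x * φ₁ x) * f (u t x) := by
    rw [← Finset.sum_add_distrib]
    apply Finset.sum_congr rfl
    intro x hx
    rw [hu_eq t ht x hx]
    ring
  have heig : ∑ x ∈ I, μ x * (u t x) * graphLap ω μ φ₁ x
      = -lam₁ * ∑ x ∈ I, μ x * u t x * φ₁ x := by
    rw [Finset.mul_sum]
    apply Finset.sum_congr rfl
    intro x hx
    rw [hφ₁_eig x hx]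
    ring
  -- Jensen's inequality
  have hJ : ∑ x ∈ I, μ x * u t x * φ₁ x = ∑ x ∈ I, (μ x * φ₁ x) • (u t x) := by
    apply Finset.sum_congr rfl
    intro x _
    simp [smul_eq_mul]; ring
  have hjensen : f (∑ x ∈ I, μ x * u t x * φ₁ x) ≤ ∑ x ∈ I, (μ x * φ₁ x) * f (u t x) := by
    rw [hJ]
    have := hf_conv.map_sum_le (t := I) (w := fun x => μ x * φ₁ x) (p := fun x => u t x)
      (fun x hx => le_of_lt (mul_pos (hμpos x) (hφ₁_pos x hx)))
      hφ₁_norm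
      (fun x hx => hu_nonneg t ht.le x (hIsub x hx))
    simpa [smul_eq_mul] using this
  rw [hsplit, green, heig]
  linarith [hjensen]
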